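/- Let P_t, for t = 0,…,T, be orthogonal projections on a finite-dimensional Hilbert space such that, for t < T, each P_t is either the identity or a projection of the form |0⟩⟨0| on some tensor factor times identity (all these commute), and P_T is an arbitrary orthogonal projection with ⟨0,ψ|P_T|0,ψ⟩ ≤ ε for all unit vectors ψ supported on the input register (where |0,ψ⟩ denotes the common +1 eigenspace of P_0,…,P_{T−1}). Then max over unit ξ of (1/(T+1))·Σ_{t=0}^{T} ⟨ξ|P_t|ξ⟩ ≤ 1 − (1 − ε − √ε)/(T+1). -/

import Mathlib

open scoped InnerProductSpace

section AvgAux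
variable {E : Type*} [NormedAddCommGroup E] [InnerProductSpace ℂ E] [FiniteDimensional ℂ E]

private lemma proj_re_inner (R : E →L[ℂ] E) (hsa : IsSelfAdjoint R) (hid : R * R = R) (x : E) :
    RCLike.re (⟪x, R x⟫_ℂ) = ‖R x‖^2 := by
  have h1 : R (R x) = R x := by rw [← ContinuousLinearMap.mul_apply, hid]
  have h2 : ⟪x, R x⟫_ℂ = ⟪R x, R x⟫_ℂ := by
    conv_lhs => rw [← h1]
    exact (hsa.isSymmetric x (R x)).symm
  rw [h2]; simp [inner_self_eq_norm_sq]; rw [← Complex.ofReal_pow, Complex.ofReal_re]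

private lemma proj_norm_le (R : E →L[ℂ] E) (hsa : IsSelfAdjoint R) (hid : R * R = R) (x : E) :
    ‖R x‖ ≤ ‖x‖ := by
  have h := proj_re_inner R hsa hid x
  have h2 := re_inner_le_norm (𝕜 := ℂ) x (R x)
  nlinarith [norm_nonneg (R x), norm_nonneg x]

private lemma proj_compl (R : E →L[ℂ] E) (hsa : IsSelfAdjoint R) (hid : R * R = R) :
    IsSelfAdjoint (1 - R) ∧ (1 - R) * (1 - R) = 1 - R := by
  refine ⟨(IsSelfAdjoint.one _).sub hsa, ?_⟩
  have h : (1 - R) * (1 - R) = 1 - R - R + R * R := by noncomm_ring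
  rw [h, hid]; abel

private lemma proj_pyth (R : E →L[ℂ] E) (hsa : IsSelfAdjoint R) (hid : R * R = R) (x : E) :
    ‖x‖^2 = ‖R x‖^2 + ‖x - R x‖^2 := by
  obtain ⟨hsa', hid'⟩ := proj_compl R hsa hid
  have h1 := proj_re_inner R hsa hid x
  have h2 := proj_re_inner (1 - R) hsa' hid' x
  have h3 : (1 - R) x = x - R x := by simp
  have h4 : ⟪x, x⟫_ℂ = ⟪x, R x⟫_ℂ + ⟪x, (1 - R) x⟫_ℂ := by
    rw [← inner_add_right, h3]; congr 1; abel
  have h5 : RCLike.re (⟪x, x⟫_ℂ) = ‖x‖^2 := by simp [inner_self_eq_norm_sq]; rw [← Complex.ofReal_pow, Complex.ofReal_re]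
  have h6 := congrArg RCLike.re h4
  rw [map_add, h1, h2, h3] at h6
  rw [← h5, h6]

private lemma proj_mul (A B : E →L[ℂ] E) (hA : IsSelfAdjoint A) (hidA : A * A = A)
    (hB : IsSelfAdjoint B) (hidB : B * B = B) (hc : A * B = B * A) :
    IsSelfAdjoint (A * B) ∧ (A * B) * (A * B) = A * B := by
  constructor
  · show star (A * B) = A * B
    rw [star_mul, hA.star_eq, hB.star_eq, hc]
  · conv_lhs => rw [mul_assoc, ← mul_assoc B, ← hc, mul_assoc A B, hidB, ← mul_assoc, hidA]

private def PnOp (T : ℕ) (P : Fin (T + 1) → (E →L[ℂ] E)) (i : ℕ) : E →L[ℂ] E :=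
  if h : i < T then P ⟨i, by omega⟩ else 1

private def QOp (T : ℕ) (P : Fin (T + 1) → (E →L[ℂ] E)) : ℕ → (E →L[ℂ] E)
  | 0 => 1
  | (k+1) => PnOp T P k * QOp T P k

variable {T : ℕ} {P : Fin (T + 1) → (E →L[ℂ] E)}

private lemma Pn_sa (hsa : ∀ t, IsSelfAdjoint (P t)) (i : ℕ) : IsSelfAdjoint (PnOp T P i) := by
  unfold PnOp; split
  · exact hsa _
  · exact IsSelfAdjoint.one _

private lemma Pn_id (hidem : ∀ t, P t * P t = P t) (i : ℕ) :
    PnOp T P i * PnOp T P i = PnOp T P i := by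
  unfold PnOp; split
  · exact hidem _
  · simp

private lemma Pn_comm
    (hcomm : ∀ s t : Fin (T + 1), (s : ℕ) < T → (t : ℕ) < T → P s * P t = P t * P s)
    (i j : ℕ) : PnOp T P i * PnOp T P j = PnOp T P j * PnOp T P i := by
  unfold PnOp
  split <;> split <;> try simp
  exact hcomm _ _ (by simpa) (by simpa)

private lemma Q_comm
    (hcomm : ∀ s t : Fin (T + 1), (s : ℕ) < T → (t : ℕ) < T → P s * P t = P t * P s)
    (i k : ℕ) : PnOp T P i * QOp T P k = QOp T P k * PnOp T P i := by
  induction k with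
  | zero => simp [QOp]
  | succ k ih =>
    show PnOp T P i * (PnOp T P k * QOp T P k) = (PnOp T P k * QOp T P k) * PnOp T P i
    rw [← mul_assoc, Pn_comm hcomm i k, mul_assoc, ih, ← mul_assoc]

private lemma Q_id (hidem : ∀ t, P t * P t = P t)
    (hcomm : ∀ s t : Fin (T + 1), (s : ℕ) < T → (t : ℕ) < T → P s * P t = P t * P s)
    (k : ℕ) : QOp T P k * QOp T P k = QOp T P k := by
  induction k with
  | zero => show (1 : E →L[ℂ] E) * 1 = 1; simp
  | succ k ih =>
    show (PnOp T P k * QOp T P k) * (PnOp T P k * QOp T P k) = PnOp T P k * QOp T P k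
    conv_lhs => rw [mul_assoc, ← mul_assoc (QOp T P k), ← Q_comm hcomm k k,
      mul_assoc (PnOp T P k) (QOp T P k), ih, ← mul_assoc, Pn_id hidem k]

private lemma Q_sa (hsa : ∀ t, IsSelfAdjoint (P t)) (hidem : ∀ t, P t * P t = P t)
    (hcomm : ∀ s t : Fin (T + 1), (s : ℕ) < T → (t : ℕ) < T → P s * P t = P t * P s)
    (k : ℕ) : IsSelfAdjoint (QOp T P k) := by
  induction k with
  | zero => exact IsSelfAdjoint.one _
  | succ k ih =>
    show IsSelfAdjoint (PnOp T P k * QOp T P k)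
    exact (proj_mul _ _ (Pn_sa hsa k) (Pn_id hidem k) ih (Q_id hidem hcomm k)
      (Q_comm hcomm k k)).1

private lemma Q_fix (hidem : ∀ t, P t * P t = P t)
    (hcomm : ∀ s t : Fin (T + 1), (s : ℕ) < T → (t : ℕ) < T → P s * P t = P t * P s)
    (k t : ℕ) (ht : t < k) : PnOp T P t * QOp T P k = QOp T P k := by
  induction k with
  | zero => omega
  | succ k ih =>
    show PnOp T P t * (PnOp T P k * QOp T P k) = PnOp T P k * QOp T P k
    rcases Nat.lt_or_ge t k with h | h
    · rw [← mul_assoc, Pn_comm hcomm t k, mul_assoc, ih h]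
    · have : t = k := by omega
      subst this
      rw [← mul_assoc, Pn_id hidem t]

private lemma Q_key (hsa : ∀ t, IsSelfAdjoint (P t)) (hidem : ∀ t, P t * P t = P t)
    (hcomm : ∀ s t : Fin (T + 1), (s : ℕ) < T → (t : ℕ) < T → P s * P t = P t * P s)
    (k : ℕ) (x : E) :
    ‖x - QOp T P k x‖^2 ≤ ∑ i ∈ Finset.range k, ‖x - PnOp T P i x‖^2 := by
  induction k with
  | zero => simp [QOp]
  | succ k ih =>
    rw [Finset.sum_range_succ]
    have hQk := Q_sa hsa hidem hcomm k
    have hQkid := Q_id hidem hcomm k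
    have hPk := Pn_sa hsa k
    have hPkid := Pn_id hidem k
    have hQk1 := Q_sa hsa hidem hcomm (k+1)
    have hQk1id := Q_id hidem hcomm (k+1)
    -- ‖x - Q(k+1)x‖² = re⟪x,(1-Q(k+1))x⟫
    obtain ⟨hc1sa, hc1id⟩ := proj_compl _ hQk1 hQk1id
    obtain ⟨hcksa, hckid⟩ := proj_compl _ hQk hQkid
    obtain ⟨hcPsa, hcPid⟩ := proj_compl _ hPk hPkid
    have e1 : ‖x - QOp T P (k+1) x‖^2 = RCLike.re (⟪x, (1 - QOp T P (k+1)) x⟫_ℂ) := by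
      rw [proj_re_inner _ hc1sa hc1id x]
      congr 1
    have e2 : ‖x - QOp T P k x‖^2 = RCLike.re (⟪x, (1 - QOp T P k) x⟫_ℂ) := by
      rw [proj_re_inner _ hcksa hckid x]
      congr 1
    -- the cross projection
    have hcross : (1 - PnOp T P k) * QOp T P k = QOp T P k * (1 - PnOp T P k) := by
      rw [sub_mul, mul_sub, one_mul, mul_one, Q_comm hcomm k k]
    obtain ⟨hmsa, hmid⟩ := proj_mul _ _ hcPsa hcPid hQk hQkid hcross
    have e3 : RCLike.re (⟪x, ((1 - PnOp T P k) * QOp T P k) x⟫_ℂ)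
        = ‖((1 - PnOp T P k) * QOp T P k) x‖^2 := proj_re_inner _ hmsa hmid x
    have edec : (1 : E →L[ℂ] E) - QOp T P (k+1) = (1 - QOp T P k) + (1 - PnOp T P k) * QOp T P k := by
      show (1 : E →L[ℂ] E) - PnOp T P k * QOp T P k = _
      rw [sub_mul, one_mul]; abel
    have e4 : ‖((1 - PnOp T P k) * QOp T P k) x‖ ≤ ‖x - PnOp T P k x‖ := by
      rw [hcross]
      have := proj_norm_le _ hQk hQkid ((1 - PnOp T P k) x)
      simpa using this
    have e5 : ‖((1 - PnOp T P k) * QOp T P k) x‖^2 ≤ ‖x - PnOp T P k x‖^2 := by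
      have h0 := norm_nonneg (((1 - PnOp T P k) * QOp T P k) x)
      nlinarith
    have e6 : RCLike.re (⟪x, (1 - QOp T P (k+1)) x⟫_ℂ)
        = RCLike.re (⟪x, (1 - QOp T P k) x⟫_ℂ)
          + RCLike.re (⟪x, ((1 - PnOp T P k) * QOp T P k) x⟫_ℂ) := by
      rw [edec]
      simp only [ContinuousLinearMap.add_apply, inner_add_right, map_add]
    rw [e1, e6, ← e2, e3]
    linarith
end AvgAux

/-- Soundness geometric bound: let `P 0, …, P T` be orthogonal projections on a
finite-dimensional complex Hilbert space such that the `P t` for `t < T` mutually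
commute, and let `L` be their common `+1`-eigenspace.  If `⟪φ, P T φ⟫ ≤ ε` for all
unit vectors `φ ∈ L`, then for every unit vector `ξ`,
`(1/(T+1)) ∑_t ⟪ξ, P t ξ⟫ ≤ 1 - (1 - ε - √ε)/(T+1)`. -/
theorem average_projection_bound
    {E : Type*} [NormedAddCommGroup E] [InnerProductSpace ℂ E] [FiniteDimensional ℂ E]
    (T : ℕ) (hT : 0 < T) (P : Fin (T + 1) → (E →L[ℂ] E)) (ε : ℝ)
    (hε : 0 ≤ ε) (hε1 : ε ≤ 1)
    (hsa : ∀ t, IsSelfAdjoint (P t))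
    (hidem : ∀ t, (P t) ∘L (P t) = P t)
    (hcomm : ∀ s t : Fin (T + 1), (s : ℕ) < T → (t : ℕ) < T →
      (P s) ∘L (P t) = (P t) ∘L (P s))
    (L : Submodule ℂ E)
    (hL : ∀ φ : E, φ ∈ L ↔ ∀ t : Fin (T + 1), (t : ℕ) < T → P t φ = φ)
    (hPT : ∀ φ ∈ L, ‖φ‖ = 1 → RCLike.re (⟪φ, P (Fin.last T) φ⟫_ℂ) ≤ ε) :
    ∀ ξ : E, ‖ξ‖ = 1 →
      (1 / ((T : ℝ) + 1)) * ∑ t : Fin (T + 1), RCLike.re (⟪ξ, P t ξ⟫_ℂ) ≤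
        1 - (1 - ε - Real.sqrt ε) / ((T : ℝ) + 1) := by
  intro ξ hξ
  have hidem' : ∀ t, P t * P t = P t := fun t => hidem t
  have hcomm' : ∀ s t : Fin (T + 1), (s : ℕ) < T → (t : ℕ) < T →
      P s * P t = P t * P s := fun s t hs ht => hcomm s t hs ht
  set Q : E →L[ℂ] E := QOp T P T with hQdef
  set φ : E := Q ξ with hφdef
  set a : ℝ := ‖φ‖ with hadef
  set b : ℝ := ‖ξ - φ‖ with hbdef
  have hQsa : IsSelfAdjoint Q := Q_sa hsa hidem' hcomm' T
  have hQid : Q * Q = Q := Q_id hidem' hcomm' T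
  have ha0 : 0 ≤ a := norm_nonneg _
  have hb0 : 0 ≤ b := norm_nonneg _
  have hab : a ^ 2 + b ^ 2 = 1 := by
    have h := proj_pyth Q hQsa hQid ξ
    rw [hξ, one_pow] at h
    linarith
  have hφL : φ ∈ L := by
    rw [hL]
    intro t ht
    have h1 : P t = PnOp T P (t : ℕ) := by
      unfold PnOp
      rw [dif_pos ht]
    rw [h1, hφdef, ← ContinuousLinearMap.mul_apply, Q_fix hidem' hcomm' T t ht]
  set PT' : E →L[ℂ] E := P (Fin.last T) with hPTdef
  have hPTsa : IsSelfAdjoint PT' := hsa _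
  have hPTid : PT' * PT' = PT' := hidem' _
  have hPTφ : ‖PT' φ‖ ^ 2 ≤ ε * a ^ 2 := by
    rcases eq_or_ne a 0 with h | h
    · have hz : φ = 0 := norm_eq_zero.mp h
      rw [hz, map_zero]
      simp [h]
    · have hapos : 0 < a := lt_of_le_of_ne ha0 (Ne.symm h)
      set u : E := ((a⁻¹ : ℝ) : ℂ) • φ with hudef
      have hu1 : ‖u‖ = 1 := by
        rw [hudef, norm_smul]
        simp only [Complex.norm_real, Real.norm_eq_abs]
        rw [abs_of_nonneg (inv_nonneg.mpr ha0)]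
        field_simp
        exact hadef.symm
      have huL : u ∈ L := L.smul_mem _ hφL
      have hle := hPT u huL hu1
      have hre : RCLike.re (⟪u, PT' u⟫_ℂ) = (a⁻¹ * ‖PT' φ‖) ^ 2 := by
        rw [proj_re_inner PT' hPTsa hPTid u]
        have hmap : PT' u = ((a⁻¹ : ℝ) : ℂ) • PT' φ := map_smul PT' _ _
        rw [hmap, norm_smul]
        simp only [Complex.norm_real, Real.norm_eq_abs]
        rw [abs_of_nonneg (inv_nonneg.mpr ha0)]
      rw [hre] at hle
      have h2 : (a⁻¹) ^ 2 * a ^ 2 = 1 := by field_simp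
      nlinarith [norm_nonneg (PT' φ), sq_nonneg a]
  have hsq : Real.sqrt ε ^ 2 = ε := Real.sq_sqrt hε
  have hsq0 : 0 ≤ Real.sqrt ε := Real.sqrt_nonneg ε
  have hPTφ' : ‖PT' φ‖ ≤ Real.sqrt ε * a := by
    nlinarith [norm_nonneg (PT' φ), mul_nonneg hsq0 ha0]
  have hPTξ : ‖PT' ξ‖ ≤ Real.sqrt ε * a + b := by
    have hdec : PT' ξ = PT' φ + PT' (ξ - φ) := by
      rw [← map_add]
      congr 1
      abel
    calc ‖PT' ξ‖ ≤ ‖PT' φ‖ + ‖PT' (ξ - φ)‖ := by rw [hdec]; exact norm_add_le _ _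
      _ ≤ Real.sqrt ε * a + b := add_le_add hPTφ' (proj_norm_le PT' hPTsa hPTid _)
  have hkey : b ^ 2 ≤ ∑ i ∈ Finset.range T, ‖ξ - PnOp T P i ξ‖ ^ 2 :=
    Q_key hsa hidem' hcomm' T ξ
  have hterm : ∀ i ∈ Finset.range T,
      RCLike.re (⟪ξ, PnOp T P i ξ⟫_ℂ) = 1 - ‖ξ - PnOp T P i ξ‖ ^ 2 := by
    intro i _
    have h := proj_pyth (PnOp T P i) (Pn_sa hsa i) (Pn_id hidem' i) ξ
    rw [hξ, one_pow] at h
    rw [proj_re_inner _ (Pn_sa hsa i) (Pn_id hidem' i) ξ]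
    linarith
  have hsplit : ∑ t : Fin (T + 1), RCLike.re (⟪ξ, P t ξ⟫_ℂ)
      = (∑ i ∈ Finset.range T, RCLike.re (⟪ξ, PnOp T P i ξ⟫_ℂ))
        + RCLike.re (⟪ξ, PT' ξ⟫_ℂ) := by
    rw [Fin.sum_univ_castSucc]
    congr 1
    rw [← Fin.sum_univ_eq_sum_range (fun i => RCLike.re (⟪ξ, PnOp T P i ξ⟫_ℂ)) T]
    refine Finset.sum_congr rfl fun t _ => ?_
    have h1 : PnOp T P (t : ℕ) = P (Fin.castSucc t) := by
      unfold PnOp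
      rw [dif_pos t.isLt]
      congr 1
    rw [h1]
  have hS1 : ∑ i ∈ Finset.range T, RCLike.re (⟪ξ, PnOp T P i ξ⟫_ℂ) ≤ (T : ℝ) - b ^ 2 := by
    rw [Finset.sum_congr rfl hterm, Finset.sum_sub_distrib]
    simp only [Finset.sum_const, Finset.card_range, nsmul_eq_mul, mul_one]
    linarith
  have hS2 : RCLike.re (⟪ξ, PT' ξ⟫_ℂ) ≤ (Real.sqrt ε * a + b) ^ 2 := by
    rw [proj_re_inner PT' hPTsa hPTid]
    nlinarith [norm_nonneg (PT' ξ), mul_nonneg hsq0 ha0]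
  have hS : ∑ t : Fin (T + 1), RCLike.re (⟪ξ, P t ξ⟫_ℂ) ≤ (T : ℝ) + ε + Real.sqrt ε := by
    rw [hsplit]
    nlinarith [mul_nonneg hε (sq_nonneg b), mul_nonneg hsq0 (sq_nonneg (a - b))]
  have hT1 : (0 : ℝ) < (T : ℝ) + 1 := by positivity
  have hfrac : (0 : ℝ) ≤ 1 / ((T : ℝ) + 1) := by positivity
  calc (1 / ((T : ℝ) + 1)) * ∑ t : Fin (T + 1), RCLike.re (⟪ξ, P t ξ⟫_ℂ)
      ≤ (1 / ((T : ℝ) + 1)) * ((T : ℝ) + ε + Real.sqrt ε) :=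
        mul_le_mul_of_nonneg_left hS hfrac
    _ = 1 - (1 - ε - Real.sqrt ε) / ((T : ℝ) + 1) := by
        field_simp
        ring
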